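/- Let G be a graph and k ≥ 1 an integer. There exist k perfect-or-partial 2-matchings of G (i.e., k subgraphs each of which is a disjoint union of edges and circuits) whose union covers every vertex of G if and only if |S| ≤ k·|N(S)| for every stable set S of G. -/

import Mathlib

/-- `M` is a matching of `G`: a set of edges of `G` that are pairwise vertex-disjoint. -/
def IsMatching {V : Type*} (G : SimpleGraph V) (M : Finset (Sym2 V)) : Prop :=
  ↑M ⊆ G.edgeSet ∧ (M : Set (Sym2 V)).Pairwise fun e f => ∀ v : V, ¬(v ∈ e ∧ v ∈ f)

/-- A vertex `v` is covered by an edge set `F` if some edge of `F` is incident to it. -/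
def Covers {V : Type*} (F : Finset (Sym2 V)) (v : V) : Prop := ∃ e ∈ F, v ∈ e

instance {V : Type*} [DecidableEq V] (F : Finset (Sym2 V)) (v : V) : Decidable (Covers F v) :=
  inferInstanceAs (Decidable (∃ e ∈ F, v ∈ e))

/-- A stable (independent) set of vertices. -/
def IsStable {V : Type*} (G : SimpleGraph V) (S : Finset V) : Prop :=
  ∀ u ∈ S, ∀ v ∈ S, ¬ G.Adj u v

/-- The external neighborhood `N(S)`. -/
def nbr {V : Type*} [Fintype V] [DecidableEq V] (G : SimpleGraph V) [DecidableRel G.Adj]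
    (S : Finset V) : Finset V :=
  Finset.univ.filter fun w => w ∉ S ∧ ∃ u ∈ S, G.Adj u w

/-- degree of a vertex in an edge set -/
def degF {V : Type*} [DecidableEq V] (F : Finset (Sym2 V)) (v : V) : ℕ :=
  (F.filter fun e => v ∈ e).card

/-- `F` is a 2-matching of `G`: a vertex-disjoint collection of edges and circuits.
Equivalently, all degrees are at most 2 and any edge having an endpoint of degree 1
has both endpoints of degree 1 (so components are single edges or circuits). -/
def Is2Matching {V : Type*} [DecidableEq V] (G : SimpleGraph V) (F : Finset (Sym2 V)) : Prop :=
  ↑F ⊆ G.edgeSet ∧ (∀ v : V, degF F v ≤ 2) ∧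
    ∀ e ∈ F, ∀ u : V, u ∈ e → degF F u = 1 → ∀ w ∈ e, degF F w = 1
set_option linter.unusedSectionVars false

/-- Existence of a "good" kept set K inside C for a functional digraph. -/
lemma exists_good {V : Type*} [DecidableEq V] (g : V → V) (C : Finset V) :
    ∃ K, K ⊆ C ∧ (∀ v ∈ C, v ∈ K ∨ ∃ u ∈ K, g u = v) ∧
      (∀ v ∈ K, g v ∈ K → ∃ u ∈ K, g u = v) := by
  classical
  induction C using Finset.strongInduction with
  | _ C ih =>
    by_cases h : ∃ v ∈ C, ∀ u ∈ C, g u ≠ v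
    · obtain ⟨v, hv, hsrc⟩ := h
      have hss : C \ {v, g v} ⊂ C := by
        refine Finset.ssubset_iff_of_subset (Finset.sdiff_subset) |>.mpr ?_
        exact ⟨v, hv, by simp⟩
      obtain ⟨K', hsub, hcov, hgood⟩ := ih _ hss
      have hK'C : K' ⊆ C := hsub.trans Finset.sdiff_subset
      refine ⟨insert v K', ?_, ?_, ?_⟩
      · intro x hx
        rcases Finset.mem_insert.mp hx with rfl | hx
        · exact hv
        · exact hK'C hx
      · intro x hx
        by_cases hxv : x = v
        · exact Or.inl (by simp [hxv])
        by_cases hxgv : x = g v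
        · exact Or.inr ⟨v, Finset.mem_insert_self _ _, hxgv.symm⟩
        have : x ∈ C \ {v, g v} := by
          simp [Finset.mem_sdiff, hx, hxv, hxgv]
        rcases hcov x this with hxK | ⟨u, hu, hgu⟩
        · exact Or.inl (Finset.mem_insert_of_mem hxK)
        · exact Or.inr ⟨u, Finset.mem_insert_of_mem hu, hgu⟩
      · intro x hx hgx
        rcases Finset.mem_insert.mp hx with hxv | hx
        · rw [hxv] at hgx
          rcases Finset.mem_insert.mp hgx with hgv | hgv
          · exact absurd hgv (hsrc v hv)
          · have := hsub hgv
            simp [Finset.mem_sdiff] at this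
        · rcases Finset.mem_insert.mp hgx with hgv | hgv
          · exact absurd hgv (hsrc x (hK'C hx))
          · obtain ⟨u, hu, hgu⟩ := hgood x hx hgv
            exact ⟨u, Finset.mem_insert_of_mem hu, hgu⟩
    · push_neg at h
      exact ⟨C, Finset.Subset.refl _, fun v hv => Or.inl hv, fun v hv _ => h v hv⟩

/-- In a finite type, a kept vertex with a kept predecessor has its successor kept. -/
lemma mem_of_pred {V : Type*} [Finite V] [DecidableEq V] (g : V → V) (K : Finset V)
    (hgood : ∀ v ∈ K, g v ∈ K → ∃ u ∈ K, g u = v)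
    (v : V) (hv : v ∈ K) (hpred : ∃ u ∈ K, g u = v) : g v ∈ K := by
  classical
  let P := {x : V // x ∈ K ∧ ∃ u ∈ K, g u = x}
  let step : P → P := fun p => ⟨p.2.2.choose, p.2.2.choose_spec.1,
    hgood _ p.2.2.choose_spec.1 (by rw [p.2.2.choose_spec.2]; exact p.2.1)⟩
  have hstep : ∀ p : P, g (step p).1 = p.1 := fun p => p.2.2.choose_spec.2
  let c : ℕ → P := fun n => step^[n] ⟨v, hv, hpred⟩
  have hc : ∀ n, c (n + 1) = step (c n) := fun n => Function.iterate_succ_apply' step n _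
  have hgc : ∀ n, g (c (n + 1)).1 = (c n).1 := fun n => by rw [hc]; exact hstep _
  have hiter : ∀ n t, g^[n] ((c (n + t)).1) = (c t).1 := by
    intro n
    induction n with
    | zero => intro t; simp
    | succ m ihm =>
      intro t
      have h1 : m + 1 + t = (m + t) + 1 := by omega
      rw [h1, Function.iterate_succ_apply, hgc (m + t)]
      exact ihm t
  obtain ⟨a, b, hne, heq⟩ := Finite.exists_ne_map_eq_of_infinite (fun n => (c n).1)
  wlog hab : a < b generalizing a b
  · exact this b a hne.symm heq.symm (by omega)
  obtain ⟨t, rfl⟩ : ∃ t, b = a + t := ⟨b - a, by omega⟩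
  have ht : t ≠ 0 := by omega
  have hct : (c t).1 = v := by
    have h1 := hiter a t
    have h2 := hiter a 0
    rw [Nat.add_zero] at h2
    have h3 : ((c a).1 : V) = (c (a + t)).1 := heq
    rw [← h3] at h1
    rw [← h1, h2]
    rfl
  obtain ⟨t', rfl⟩ : ∃ t', t = t' + 1 := ⟨t - 1, by omega⟩
  have : g v = (c t').1 := by rw [← hct, hgc t']
  rw [this]
  exact (c t').2.1

section TwoM
variable {V : Type*} [Fintype V] [DecidableEq V] {G : SimpleGraph V}
variable {g : V → V} {K : Finset V}

lemma filter_image_eq (g : V → V) (K : Finset V) (w : V) :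
    ((K.image fun v => s(v, g v)).filter fun e => w ∈ e) =
      (K.filter fun x => w = x ∨ w = g x).image fun x => s(x, g x) := by
  ext e
  simp only [Finset.mem_filter, Finset.mem_image]
  constructor
  · rintro ⟨⟨x, hx, rfl⟩, hw⟩
    exact ⟨x, ⟨hx, by simpa using hw⟩, rfl⟩
  · rintro ⟨x, ⟨hx, hw⟩, rfl⟩
    exact ⟨⟨x, hx, rfl⟩, by simpa using hw⟩

variable (hadj : ∀ v ∈ K, G.Adj v (g v))
    (hinj : ∀ u ∈ K, ∀ v ∈ K, g u = g v → u = v)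
    (hgood : ∀ v ∈ K, g v ∈ K → ∃ u ∈ K, g u = v)

include hadj in
lemma gne {v : V} (hv : v ∈ K) : g v ≠ v := fun h => G.irrefl (h ▸ hadj v hv)

include hinj in
lemma deg_c3 {v : V} (hv : v ∈ K) (h : g v ∉ K) :
    degF (K.image fun x => s(x, g x)) (g v) = 1 := by
  rw [degF, filter_image_eq]
  have : (K.filter fun x => g v = x ∨ g v = g x) = {v} := by
    ext x
    simp only [Finset.mem_filter, Finset.mem_singleton]
    constructor
    · rintro ⟨hx, rfl | hgx⟩
      · exact absurd hx h
      · exact hinj x hx v hv hgx.symm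
    · rintro rfl; exact ⟨hv, Or.inr rfl⟩
  rw [this]; simp

lemma deg_c2 {v : V} (hv : v ∈ K) (h : ¬∃ u ∈ K, g u = v) :
    degF (K.image fun x => s(x, g x)) v = 1 := by
  rw [degF, filter_image_eq]
  have : (K.filter fun x => v = x ∨ v = g x) = {v} := by
    ext x
    simp only [Finset.mem_filter, Finset.mem_singleton]
    constructor
    · rintro ⟨hx, rfl | hgx⟩
      · rfl
      · exact absurd ⟨x, hx, hgx.symm⟩ h
    · rintro rfl; exact ⟨hv, Or.inl rfl⟩
  rw [this]; simp

include hinj in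
lemma deg_c1 {v : V} (hv : v ∈ K) (hgv : g v ∈ K) (h : g (g v) = v) :
    degF (K.image fun x => s(x, g x)) v = 1 := by
  rw [degF, filter_image_eq]
  have h1 : (K.filter fun x => v = x ∨ v = g x) = {v, g v} := by
    ext x
    simp only [Finset.mem_filter, Finset.mem_insert, Finset.mem_singleton]
    constructor
    · rintro ⟨hx, rfl | hgx⟩
      · exact Or.inl rfl
      · exact Or.inr (hinj x hx (g v) hgv (by rw [← hgx, h]))
    · rintro (rfl | rfl)
      · exact ⟨hv, Or.inl rfl⟩
      · exact ⟨hgv, Or.inr h.symm⟩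
  rw [h1, Finset.image_insert, Finset.image_singleton, h]
  rw [show s(g v, v) = s(v, g v) from Sym2.eq_swap]
  simp

include hadj hinj hgood in
lemma deg_c4a {v : V} (hv : v ∈ K) (hgv : g v ∈ K) (h : g (g v) ≠ v) :
    degF (K.image fun x => s(x, g x)) v = 2 := by
  obtain ⟨u, hu, hgu⟩ := hgood v hv hgv
  rw [degF, filter_image_eq]
  have h1 : (K.filter fun x => v = x ∨ v = g x) = {v, u} := by
    ext x
    simp only [Finset.mem_filter, Finset.mem_insert, Finset.mem_singleton]
    constructor
    · rintro ⟨hx, rfl | hgx⟩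
      · exact Or.inl rfl
      · exact Or.inr (hinj x hx u hu (by rw [← hgx, hgu]))
    · rintro (rfl | rfl)
      · exact ⟨hv, Or.inl rfl⟩
      · exact ⟨hu, Or.inr hgu.symm⟩
  have hvu : v ≠ u := fun hvu => gne hadj hv (by rw [← hvu] at hgu; exact hgu)
  have hual : u ≠ g v := fun huv => h (by rw [← huv, hgu])
  rw [h1, Finset.image_insert, Finset.image_singleton, hgu]
  rw [Finset.card_insert_of_notMem, Finset.card_singleton]
  rw [Finset.mem_singleton, Sym2.eq_iff]
  rintro (⟨h2, h3⟩ | ⟨h2, h3⟩)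
  · exact gne hadj hv h3
  · exact hual h3.symm

include hadj hinj hgood in
lemma deg_c4b {v : V} (hv : v ∈ K) (hgv : g v ∈ K) (h : g (g v) ≠ v) :
    degF (K.image fun x => s(x, g x)) (g v) = 2 := by
  rw [degF, filter_image_eq]
  have h1 : (K.filter fun x => g v = x ∨ g v = g x) = {g v, v} := by
    ext x
    simp only [Finset.mem_filter, Finset.mem_insert, Finset.mem_singleton]
    constructor
    · rintro ⟨hx, rfl | hgx⟩
      · exact Or.inl rfl
      · exact Or.inr (hinj x hx v hv hgx.symm)
    · rintro (rfl | rfl)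
      · exact ⟨hgv, Or.inl rfl⟩
      · exact ⟨hv, Or.inr rfl⟩
  have hne' : g v ≠ v := gne hadj hv
  rw [h1, Finset.image_insert, Finset.image_singleton]
  rw [Finset.card_insert_of_notMem, Finset.card_singleton]
  rw [Finset.mem_singleton, Sym2.eq_iff]
  rintro (⟨h2, h3⟩ | ⟨h2, h3⟩)
  · exact hne' h2
  · exact h h3

include hadj hinj hgood in
lemma is2Matching_of_good'
    (mem_of_pred' : ∀ v ∈ K, (∃ u ∈ K, g u = v) → g v ∈ K) :
    Is2Matching G (K.image fun x => s(x, g x)) := by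
  classical
  refine ⟨?_, ?_, ?_⟩
  · intro e he
    simp only [Finset.coe_image, Set.mem_image, Finset.mem_coe] at he
    obtain ⟨x, hx, rfl⟩ := he
    exact hadj x hx
  · intro w
    rw [degF, filter_image_eq]
    calc ((K.filter fun x => w = x ∨ w = g x).image fun x => s(x, g x)).card
        ≤ (K.filter fun x => w = x ∨ w = g x).card := Finset.card_image_le
      _ ≤ (insert w (K.filter fun x => g x = w)).card := by
          apply Finset.card_le_card
          intro x hx
          rcases Finset.mem_filter.mp hx with ⟨hxK, rfl | hgx⟩
          · exact Finset.mem_insert_self _ _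
          · exact Finset.mem_insert_of_mem (Finset.mem_filter.mpr ⟨hxK, hgx.symm⟩)
      _ ≤ (K.filter fun x => g x = w).card + 1 := Finset.card_insert_le _ _
      _ ≤ 1 + 1 := by
          have : (K.filter fun x => g x = w).card ≤ 1 := by
            apply Finset.card_le_one.mpr
            intro a ha b hb
            rw [Finset.mem_filter] at ha hb
            exact hinj a ha.1 b hb.1 (ha.2.trans hb.2.symm)
          omega
  · intro e he u hu hdu w hw
    obtain ⟨x, hx, rfl⟩ := Finset.mem_image.mp he
    have hboth : degF (K.image fun x => s(x, g x)) x = 1 ∧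
        degF (K.image fun x => s(x, g x)) (g x) = 1 := by
      by_cases hgx : g x ∈ K
      · by_cases hcyc : g (g x) = x
        · exact ⟨deg_c1 hinj hx hgx hcyc,
            deg_c1 hinj hgx (by rw [hcyc]; exact hx) (by rw [hcyc])⟩
        · exfalso
          have h1 := deg_c4a hadj hinj hgood hx hgx hcyc
          have h2 := deg_c4b hadj hinj hgood hx hgx hcyc
          rcases Sym2.mem_iff.mp hu with rfl | rfl
          · rw [hdu] at h1; omega
          · rw [hdu] at h2; omega
      · refine ⟨?_, deg_c3 hinj hx hgx⟩
        by_cases hpx : ∃ u ∈ K, g u = x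
        · exact absurd (mem_of_pred' x hx hpx) hgx
        · exact deg_c2 hx hpx
    rcases Sym2.mem_iff.mp hw with rfl | rfl
    · exact hboth.1
    · exact hboth.2
end TwoM

section Fwd
variable {V : Type*} [Fintype V] [DecidableEq V] {G : SimpleGraph V} [DecidableRel G.Adj]
variable {F : Finset (Sym2 V)} {S : Finset V}

lemma other_endpoint (hF : ↑F ⊆ G.edgeSet) (hS : IsStable G S)
    {v : V} (hv : v ∈ S) {e : Sym2 V} (he : e ∈ F) (hve : v ∈ e) :
    ∃ w ∈ nbr G S, e = s(v, w) := by
  induction e using Sym2.ind with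
  | _ a b =>
    have hadj : G.Adj a b := hF he
    rcases Sym2.mem_iff.mp hve with rfl | rfl
    · refine ⟨b, ?_, rfl⟩
      have hbS : b ∉ S := fun hb => hS v hv b hb hadj
      simp only [nbr, Finset.mem_filter, Finset.mem_univ, true_and]
      exact ⟨hbS, v, hv, hadj⟩
    · refine ⟨a, ?_, Sym2.eq_swap⟩
      have haS : a ∉ S := fun ha => hS v hv a ha hadj.symm
      simp only [nbr, Finset.mem_filter, Finset.mem_univ, true_and]
      exact ⟨haS, v, hv, hadj.symm⟩

lemma card_nbr_filter (hF : ↑F ⊆ G.edgeSet) (hS : IsStable G S) {v : V} (hv : v ∈ S) :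
    ((nbr G S).filter fun w => s(v, w) ∈ F).card = degF F v := by
  rw [degF]
  apply Finset.card_bij (fun w _ => s(v, w))
  · intro w hw
    rw [Finset.mem_filter] at hw ⊢
    exact ⟨hw.2, Sym2.mem_mk_left _ _⟩
  · intro w1 hw1 w2 hw2 h
    exact Sym2.congr_right.mp h
  · intro e he
    rw [Finset.mem_filter] at he
    obtain ⟨w, hw, rfl⟩ := other_endpoint hF hS hv he.1 he.2
    exact ⟨w, Finset.mem_filter.mpr ⟨hw, he.1⟩, rfl⟩

lemma covers_iff_degF_pos : Covers F v ↔ 0 < degF F v := by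
  rw [degF, Finset.card_pos]
  constructor
  · rintro ⟨e, he, hv⟩; exact ⟨e, Finset.mem_filter.mpr ⟨he, hv⟩⟩
  · rintro ⟨e, he⟩; rw [Finset.mem_filter] at he; exact ⟨e, he.1, he.2⟩

lemma covered_le_nbr (hF : Is2Matching G F) (hS : IsStable G S) :
    (S.filter fun v => Covers F v).card ≤ (nbr G S).card := by
  classical
  set c : V → ℕ := fun v => if degF F v = 1 then 2 else 1 with hc
  have hterm : ∀ v ∈ S, c v * degF F v = if Covers F v then 2 else 0 := by
    intro v hv
    by_cases hcov : Covers F v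
    · have hpos : 0 < degF F v := covers_iff_degF_pos.mp hcov
      have hle : degF F v ≤ 2 := hF.2.1 v
      by_cases h1 : degF F v = 1
      · simp [hc, h1, hcov]
      · have h2 : degF F v = 2 := by omega
        simp [hc, h1, h2, hcov]
    · have h0 : degF F v = 0 := by
        by_contra h
        exact hcov (covers_iff_degF_pos.mpr (Nat.pos_of_ne_zero h))
      simp [h0, hcov]
  have e1 : ∑ v ∈ S, c v * degF F v = 2 * (S.filter fun v => Covers F v).card := by
    rw [Finset.sum_congr rfl hterm, ← Finset.sum_filter, Finset.sum_const, smul_eq_mul,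
      mul_comm]
  have e2 : ∑ v ∈ S, c v * degF F v =
      ∑ w ∈ nbr G S, ∑ v ∈ S, if s(v, w) ∈ F then c v else 0 := by
    rw [Finset.sum_congr rfl (fun v hv => ?_), Finset.sum_comm]
    rw [← card_nbr_filter hF.1 hS hv, ← Finset.sum_filter, Finset.sum_const, smul_eq_mul,
      mul_comm]
  have e3 : ∀ w ∈ nbr G S, (∑ v ∈ S, if s(v, w) ∈ F then c v else 0) ≤ 2 := by
    intro w _
    rw [← Finset.sum_filter]
    set A := S.filter fun v => s(v, w) ∈ F with hA
    have hAcard : A.card ≤ (F.filter fun e => w ∈ e).card := by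
      apply Finset.card_le_card_of_injOn (fun v => s(v, w))
      · intro v hv
        rw [hA, Finset.mem_coe, Finset.mem_filter] at hv
        exact Finset.mem_filter.mpr ⟨hv.2, Sym2.mem_mk_right _ _⟩
      · intro v1 _ v2 _ h
        exact Sym2.congr_left.mp h
    have hdegw : (F.filter fun e => w ∈ e).card = degF F w := rfl
    by_cases h2 : 2 ≤ A.card
    · have hcv : ∀ v ∈ A, c v = 1 := by
        intro v hv
        rw [hA, Finset.mem_filter] at hv
        rw [hc]
        simp only
        rw [if_neg]
        intro h1
        have hw1 : degF F w = 1 :=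
          hF.2.2 s(v, w) hv.2 v (Sym2.mem_mk_left _ _) h1 w (Sym2.mem_mk_right _ _)
        omega
      calc ∑ v ∈ A, c v = ∑ _v ∈ A, 1 := Finset.sum_congr rfl hcv
        _ = A.card := by simp
        _ ≤ degF F w := hdegw ▸ hAcard
        _ ≤ 2 := hF.2.1 w
    · have hcv2 : ∀ v ∈ A, c v ≤ 2 := by
        intro v _
        rw [hc]
        dsimp only
        split <;> omega
      calc ∑ v ∈ A, c v ≤ A.card * 2 := by
            simpa [smul_eq_mul] using Finset.sum_le_card_nsmul A c 2 hcv2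
        _ ≤ 2 := by omega
  have e4 : (∑ w ∈ nbr G S, ∑ v ∈ S, if s(v, w) ∈ F then c v else 0) ≤
      2 * (nbr G S).card := by
    calc (∑ w ∈ nbr G S, ∑ v ∈ S, if s(v, w) ∈ F then c v else 0)
        ≤ ∑ _w ∈ nbr G S, 2 := Finset.sum_le_sum e3
      _ = 2 * (nbr G S).card := by rw [Finset.sum_const, smul_eq_mul, mul_comm]
  omega
end Fwd

theorem stmt_12 {V : Type*} [Fintype V] [DecidableEq V] (G : SimpleGraph V) [DecidableRel G.Adj]
    (k : ℕ) (hk : 1 ≤ k) :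
    (∃ H : Fin k → Finset (Sym2 V),
        (∀ i, Is2Matching G (H i)) ∧ ∀ v : V, ∃ i, Covers (H i) v) ↔
      ∀ S : Finset V, IsStable G S → S.card ≤ k * (nbr G S).card := by
  constructor
  · rintro ⟨H, h2m, hcov⟩ S hS
    have hsub : S ⊆ Finset.univ.biUnion fun i : Fin k => S.filter fun v => Covers (H i) v := by
      intro v hv
      obtain ⟨i, hi⟩ := hcov v
      exact Finset.mem_biUnion.mpr ⟨i, Finset.mem_univ _, Finset.mem_filter.mpr ⟨hv, hi⟩⟩
    calc S.card ≤ (Finset.univ.biUnion fun i : Fin k => S.filter fun v => Covers (H i) v).card :=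
          Finset.card_le_card hsub
      _ ≤ ∑ i : Fin k, (S.filter fun v => Covers (H i) v).card := Finset.card_biUnion_le
      _ ≤ ∑ _i : Fin k, (nbr G S).card :=
          Finset.sum_le_sum fun i _ => covered_le_nbr (h2m i) hS
      _ = k * (nbr G S).card := by
          rw [Finset.sum_const, Finset.card_univ, Fintype.card_fin, smul_eq_mul]
  · intro hyp
    classical
    set t : V → Finset (V × Fin k) := fun v => G.neighborFinset v ×ˢ Finset.univ with ht
    have hall : ∀ A : Finset V, A.card ≤ (A.biUnion t).card := by
      intro A
      set S := A.filter fun v => ∀ u ∈ A, ¬ G.Adj u v with hSdef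
      have hstable : IsStable G S := by
        intro u hu v hv hadj
        rw [hSdef, Finset.mem_filter] at hv
        exact hv.2 u (Finset.mem_filter.mp hu).1 hadj
      have h1 : S.card ≤ k * (nbr G S).card := hyp S hstable
      set Γ : Finset V := A.biUnion (fun v => G.neighborFinset v) with hΓ
      have hbu : A.biUnion t = Γ ×ˢ (Finset.univ : Finset (Fin k)) := by
        ext ⟨w, i⟩
        simp [ht, hΓ, Finset.mem_biUnion, Finset.mem_product]
      have hnsub : nbr G S ⊆ Γ := by
        intro w hw
        simp only [nbr, Finset.mem_filter, Finset.mem_univ, true_and] at hw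
        obtain ⟨hwS, u, hu, hadj⟩ := hw
        have huA : u ∈ A := (Finset.mem_filter.mp hu).1
        exact Finset.mem_biUnion.mpr ⟨u, huA, (SimpleGraph.mem_neighborFinset _ _ _).mpr hadj⟩
      have hAS : A \ S ⊆ Γ := by
        intro v hv
        rw [Finset.mem_sdiff] at hv
        have h2 := hv.2
        rw [hSdef, Finset.mem_filter] at h2
        push_neg at h2
        obtain ⟨u, hu, hadj⟩ := h2 hv.1
        exact Finset.mem_biUnion.mpr
          ⟨u, hu, (SimpleGraph.mem_neighborFinset _ _ _).mpr hadj⟩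
      have hdisj : Disjoint (nbr G S) (A \ S) := by
        rw [Finset.disjoint_left]
        intro w hw hwA
        simp only [nbr, Finset.mem_filter, Finset.mem_univ, true_and] at hw
        obtain ⟨hwS, u, hu, hadj⟩ := hw
        rw [hSdef, Finset.mem_filter] at hu
        exact hu.2 w (Finset.mem_sdiff.mp hwA).1 hadj.symm
      have hcard : A.card = S.card + (A \ S).card := by
        rw [add_comm, Finset.card_sdiff_add_card_eq_card (Finset.filter_subset _ _)]
      have hunion : (nbr G S ∪ (A \ S)).card = (nbr G S).card + (A \ S).card :=
        Finset.card_union_of_disjoint hdisj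
      have hsubΓ : nbr G S ∪ (A \ S) ⊆ Γ := Finset.union_subset hnsub hAS
      have h3 : (nbr G S).card + (A \ S).card ≤ Γ.card :=
        hunion ▸ Finset.card_le_card hsubΓ
      have h4 : (A \ S).card ≤ k * (A \ S).card :=
        Nat.le_mul_of_pos_left _ (by omega)
      have h5 : A.card ≤ k * Γ.card := by
        calc A.card = S.card + (A \ S).card := hcard
          _ ≤ k * (nbr G S).card + k * (A \ S).card := by omega
          _ = k * ((nbr G S).card + (A \ S).card) := by ring
          _ ≤ k * Γ.card := Nat.mul_le_mul_left _ h3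
      rw [hbu, Finset.card_product, Finset.card_univ, Fintype.card_fin]
      exact h5.trans_eq (Nat.mul_comm _ _)
    obtain ⟨f, hfinj, hft⟩ := (Finset.all_card_le_biUnion_card_iff_exists_injective t).mp hall
    set g : V → V := fun v => (f v).1 with hg
    have hgadj : ∀ v, G.Adj v (g v) := by
      intro v
      have h6 := hft v
      rw [ht, Finset.mem_product] at h6
      exact (SimpleGraph.mem_neighborFinset _ _ _).mp h6.1
    have hK := fun i : Fin k => exists_good g (Finset.univ.filter fun v => (f v).2 = i)
    choose K hKsub hKcov hKgood using hK
    refine ⟨fun i => (K i).image fun v => s(v, g v), ?_, ?_⟩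
    · intro i
      have hinj : ∀ u ∈ K i, ∀ v ∈ K i, g u = g v → u = v := by
        intro u hu v hv hguv
        have hu2 := Finset.mem_filter.mp (hKsub i hu)
        have hv2 := Finset.mem_filter.mp (hKsub i hv)
        exact hfinj (Prod.ext hguv (hu2.2.trans hv2.2.symm))
      exact is2Matching_of_good' (fun v _ => hgadj v) hinj (hKgood i)
        (fun v hv hp => mem_of_pred g (K i) (hKgood i) v hv hp)
    · intro v
      refine ⟨(f v).2, ?_⟩
      have hvC : v ∈ Finset.univ.filter fun w => (f w).2 = (f v).2 :=
        Finset.mem_filter.mpr ⟨Finset.mem_univ _, rfl⟩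
      rcases hKcov (f v).2 v hvC with hvK | ⟨u, hu, hgu⟩
      · exact ⟨s(v, g v), Finset.mem_image_of_mem _ hvK, Sym2.mem_mk_left _ _⟩
      · exact ⟨s(u, g u), Finset.mem_image_of_mem _ hu, by
          rw [← hgu]; exact Sym2.mem_mk_right _ _⟩
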